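/- arXiv:1806.06873 — 3 statements merged into one kernel-verified Lean document; each statement's English description precedes it below -/
import Mathlib

section
/- Let C be a k-linear category with finite biproducts. If f : X ⟶ X and g : Y ⟶ Y are endomorphisms in C, then [f ⊕ g] = [f] + [g] in Tr(C), where f ⊕ g : X ⊕ Y ⟶ X ⊕ Y denotes the biproduct morphism biprod.map f g. -/
open CategoryTheory CategoryTheory.Limits DirectSum

attribute [local instance] CategoryTheory.Limits.hasBinaryBiproducts_of_finite_biproducts

variable (k : Type*) [CommRing k]
variable (C : Type*) [Category C] [Preadditive C] [CategoryTheory.Linear k C]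

/-- The submodule of `⨁ X, End X` spanned by the commutators `f ≫ g - g ≫ f`,
for all pairs of morphisms `f : X ⟶ Y` and `g : Y ⟶ X`. -/
def traceRelations : Submodule k (⨁ X : C, (X ⟶ X)) :=
  letI : DecidableEq C := Classical.decEq C
  Submodule.span k
    { m | ∃ (X Y : C) (f : X ⟶ Y) (g : Y ⟶ X),
        m = DirectSum.of (fun Z : C => Z ⟶ Z) X (f ≫ g) -
            DirectSum.of (fun Z : C => Z ⟶ Z) Y (g ≫ f) }

/-- The trace (zeroth Hochschild homology) of a `k`-linear category `C`:
the quotient of `⨁ X, End X` by the span of all commutators `f ≫ g - g ≫ f`. -/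
abbrev CatTrace := (⨁ X : C, (X ⟶ X)) ⧸ traceRelations k C

/-- The class `[f]` in `Tr(C)` of an endomorphism `f : X ⟶ X`. -/
noncomputable def traceClass {X : C} (f : X ⟶ X) : CatTrace k C :=
  letI : DecidableEq C := Classical.decEq C
  Submodule.Quotient.mk (DirectSum.of (fun Z : C => Z ⟶ Z) X f)

/-- Let `C` be a `k`-linear category with finite biproducts.  If `f : X ⟶ X` and
`g : Y ⟶ Y` are endomorphisms in `C`, then `[f ⊕ g] = [f] + [g]` in `Tr(C)`. -/
theorem traceClass_biprod_map [HasFiniteBiproducts C] {X Y : C}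
    (f : X ⟶ X) (g : Y ⟶ Y) :
    traceClass k C (biprod.map f g) = traceClass k C f + traceClass k C g := by
  letI : DecidableEq C := Classical.decEq C
  rw [traceClass, traceClass, traceClass, ← Submodule.Quotient.mk_add,
    Submodule.Quotient.eq]
  have h1 : DirectSum.of (fun Z : C => Z ⟶ Z) X ((f ≫ biprod.inl) ≫ biprod.fst) -
      DirectSum.of (fun Z : C => Z ⟶ Z) (X ⊞ Y) (biprod.fst ≫ (f ≫ biprod.inl)) ∈
      traceRelations k C :=
    Submodule.subset_span ⟨X, X ⊞ Y, f ≫ biprod.inl, biprod.fst, rfl⟩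
  have h2 : DirectSum.of (fun Z : C => Z ⟶ Z) Y ((g ≫ biprod.inr) ≫ biprod.snd) -
      DirectSum.of (fun Z : C => Z ⟶ Z) (X ⊞ Y) (biprod.snd ≫ (g ≫ biprod.inr)) ∈
      traceRelations k C :=
    Submodule.subset_span ⟨Y, X ⊞ Y, g ≫ biprod.inr, biprod.snd, rfl⟩
  have key : DirectSum.of (fun Z : C => Z ⟶ Z) (X ⊞ Y) (biprod.map f g) -
      (DirectSum.of (fun Z : C => Z ⟶ Z) X f + DirectSum.of (fun Z : C => Z ⟶ Z) Y g) =
      -((DirectSum.of (fun Z : C => Z ⟶ Z) X ((f ≫ (biprod.inl : X ⟶ X ⊞ Y)) ≫ biprod.fst) -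
          DirectSum.of (fun Z : C => Z ⟶ Z) (X ⊞ Y) (biprod.fst ≫ (f ≫ (biprod.inl : X ⟶ X ⊞ Y)))) +
        (DirectSum.of (fun Z : C => Z ⟶ Z) Y ((g ≫ (biprod.inr : Y ⟶ X ⊞ Y)) ≫ biprod.snd) -
          DirectSum.of (fun Z : C => Z ⟶ Z) (X ⊞ Y) (biprod.snd ≫ (g ≫ (biprod.inr : Y ⟶ X ⊞ Y))))) := by
    have hf : (f ≫ (biprod.inl : X ⟶ X ⊞ Y)) ≫ biprod.fst = f := by simp
    have hg : (g ≫ (biprod.inr : Y ⟶ X ⊞ Y)) ≫ biprod.snd = g := by simp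
    rw [hf, hg, biprod.map_eq, map_add]
    abel
  rw [key]
  exact neg_mem (add_mem h1 h2)
end

section
/- Let C be a k-linear category with finite biproducts. Then there is a well-defined homomorphism of abelian groups h_C : K_0(C) → Tr(C) (the Chern character map) determined by h_C([X]_≅) = [1_X] for every object X of C. -/
open CategoryTheory CategoryTheory.Limits DirectSum

variable (k : Type*) [CommRing k]
variable (C : Type*) [Category C]

attribute [local instance] CategoryTheory.isIsomorphicSetoid
attribute [local instance] CategoryTheory.Limits.hasBinaryBiproducts_of_finite_biproducts

section K0Defs

variable [Preadditive C] [HasBinaryBiproducts C]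

/-- The subgroup of the free abelian group on the isomorphism classes of objects of `C`
generated by the elements `[X ⊕ Y] - [X] - [Y]`. -/
def grothendieckRelators :
    AddSubgroup (FreeAbelianGroup (Quotient (isIsomorphicSetoid C))) :=
  AddSubgroup.closure
    { a | ∃ X Y : C,
        a = FreeAbelianGroup.of ⟦X ⊞ Y⟧ - FreeAbelianGroup.of ⟦X⟧ -
          FreeAbelianGroup.of ⟦Y⟧ }

/-- The split Grothendieck group `K₀(C)` of an additive category `C`: the quotient of
the free abelian group on the isomorphism classes of objects of `C` by the subgroup
generated by the elements `[X ⊕ Y] - [X] - [Y]`. -/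
abbrev K0 := FreeAbelianGroup (Quotient (isIsomorphicSetoid C)) ⧸ grothendieckRelators C

/-- The class `[X]` in `K₀(C)` of an object `X` of `C`. -/
def K0.cls (X : C) : K0 C :=
  QuotientAddGroup.mk (FreeAbelianGroup.of ⟦X⟧)

end K0Defs

section Aux

variable [Preadditive C] [CategoryTheory.Linear k C]

lemma traceClass_comm {X Y : C} (f : X ⟶ Y) (g : Y ⟶ X) :
    traceClass k C (f ≫ g) = traceClass k C (g ≫ f) := by
  letI : DecidableEq C := Classical.decEq C
  unfold traceClass
  rw [Submodule.Quotient.eq]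
  unfold traceRelations
  exact Submodule.subset_span ⟨X, Y, f, g, rfl⟩

lemma traceClass_add {X : C} (f g : X ⟶ X) :
    traceClass k C (f + g) = traceClass k C f + traceClass k C g := by
  letI : DecidableEq C := Classical.decEq C
  unfold traceClass
  rw [← Submodule.Quotient.mk_add]
  congr 1
  exact map_add (DirectSum.of (fun Z : C => Z ⟶ Z) X) f g

lemma traceClass_iso {X Y : C} (e : X ≅ Y) :
    traceClass k C (𝟙 X) = traceClass k C (𝟙 Y) := by
  have h1 := traceClass_comm k C e.hom e.inv
  rw [e.hom_inv_id, e.inv_hom_id] at h1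
  exact h1

end Aux

/-- Let `C` be a `k`-linear category with finite biproducts.  Then there is a
well-defined homomorphism of abelian groups `h : K₀(C) → Tr(C)` (the Chern character
map) determined by `h([X]) = [1_X]` for every object `X` of `C`. -/

theorem chern_character_exists [Preadditive C] [CategoryTheory.Linear k C]
    [HasFiniteBiproducts C] :
    ∃! h : K0 C →+ CatTrace k C, ∀ X : C, h (K0.cls C X) = traceClass k C (𝟙 X) := by
  classical
  letI : HasBinaryBiproducts C := hasBinaryBiproducts_of_finite_biproducts C
  -- the map on iso classes
  have hwell : ∀ X Y : C, X ≈ Y → traceClass k C (𝟙 X) = traceClass k C (𝟙 Y) := by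
    intro X Y ⟨e⟩
    exact traceClass_iso k C e
  let t : Quotient (isIsomorphicSetoid C) → CatTrace k C :=
    Quotient.lift (fun X : C => traceClass k C (𝟙 X)) hwell
  let φ : FreeAbelianGroup (Quotient (isIsomorphicSetoid C)) →+ CatTrace k C :=
    FreeAbelianGroup.lift t
  have hker : grothendieckRelators C ≤ φ.ker := by
    rw [grothendieckRelators, AddSubgroup.closure_le]
    rintro a ⟨X, Y, rfl⟩
    simp only [SetLike.mem_coe, AddMonoidHom.mem_ker, map_sub]
    have h1 : ∀ Z : C, φ (FreeAbelianGroup.of ⟦Z⟧) = traceClass k C (𝟙 Z) := by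
      intro Z
      simp [φ, t, FreeAbelianGroup.lift_apply_of]
    rw [h1, h1, h1]
    have htot : (biprod.fst ≫ biprod.inl + biprod.snd ≫ biprod.inr : X ⊞ Y ⟶ X ⊞ Y) = 𝟙 (X ⊞ Y) :=
      biprod.total
    have : traceClass k C (𝟙 (X ⊞ Y)) = traceClass k C (𝟙 X) + traceClass k C (𝟙 Y) := by
      rw [← htot, traceClass_add, traceClass_comm k C biprod.fst biprod.inl,
        traceClass_comm k C biprod.snd biprod.inr]
      simp
    rw [this]
    abel
  refine ⟨QuotientAddGroup.lift _ φ hker, ?_, ?_⟩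
  · intro X
    show φ (FreeAbelianGroup.of ⟦X⟧) = _
    simp [φ, t, FreeAbelianGroup.lift_apply_of]
  · intro g hg
    ext a
    refine Quotient.inductionOn a (fun Z => ?_)
    show g (K0.cls C Z) = φ (FreeAbelianGroup.of ⟦Z⟧)
    rw [hg Z]
    simp [φ, t, FreeAbelianGroup.lift_apply_of]
end

section
/- Let k be a field and let Vect_k be the category of finite-dimensional k-vector spaces. The assignment [f] ↦ tr(f) (the usual trace of a linear endomorphism f) induces a well-defined isomorphism of k-modules Tr(Vect_k) → k. -/
open CategoryTheory CategoryTheory.Limits DirectSum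

variable (k : Type*) [CommRing k]
variable (C : Type*) [Category C] [Preadditive C] [CategoryTheory.Linear k C]

section Aux

universe u

variable (k : Type) [Field k]

instance auxFin (V : FGModuleCat k) : Module.Finite k V.obj := V.property

/-- The underlying linear map of an endomorphism, as a linear map. -/
def auxHom (X : FGModuleCat k) : (X ⟶ X) →ₗ[k] (X →ₗ[k] X) where
  toFun f := f.hom.hom
  map_add' _ _ := rfl
  map_smul' _ _ := rfl

/-- The total trace map on the direct sum. -/
noncomputable def auxT : (⨁ X : FGModuleCat k, (X ⟶ X)) →ₗ[k] k :=
  letI : DecidableEq (FGModuleCat k) := Classical.decEq _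
  DirectSum.toModule k (FGModuleCat k) k (fun X => (LinearMap.trace k X).comp (auxHom k X))

lemma auxT_of (X : FGModuleCat k) (f : X ⟶ X) :
    letI : DecidableEq (FGModuleCat k) := Classical.decEq _
    auxT k (DirectSum.of (fun Z : FGModuleCat k => Z ⟶ Z) X f) = LinearMap.trace k X f.hom.hom := by
  letI : DecidableEq (FGModuleCat k) := Classical.decEq _
  rw [← DirectSum.lof_eq_of k]
  exact DirectSum.toModule_lof (ι := FGModuleCat k) k (M := fun Z : FGModuleCat k => Z ⟶ Z) X f

lemma auxT_vanish : traceRelations k (FGModuleCat k) ≤ LinearMap.ker (auxT k) := by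
  letI : DecidableEq (FGModuleCat k) := Classical.decEq _
  rw [traceRelations, Submodule.span_le]
  rintro m ⟨X, Y, f, g, rfl⟩
  simp only [SetLike.mem_coe, LinearMap.mem_ker, map_sub, auxT_of]
  rw [map_sub, sub_eq_zero]
  exact (auxT_of k X (f ≫ g)).trans
    ((LinearMap.trace_comp_comm' f.hom.hom g.hom.hom).trans (auxT_of k Y (g ≫ f)).symm)

/-- The key relation: `[f] = tr f • [𝟙 (FGModuleCat.of k k)]`. -/
lemma auxKey (X : FGModuleCat.{u} k) (f : X ⟶ X) :
    traceClass k (FGModuleCat k) f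
      = LinearMap.trace k X f.hom.hom • traceClass k (FGModuleCat k) (𝟙 (FGModuleCat.of k (ULift.{u} k))) := by
  letI : DecidableEq (FGModuleCat k) := Classical.decEq _
  set ℓ : FGModuleCat k := FGModuleCat.of k (ULift.{u} k)
  rw [traceClass, traceClass, ← Submodule.Quotient.mk_smul, Submodule.Quotient.eq]
  set b := Module.finBasis k X with hb
  have hh : ∀ i, ∃ (h : X ⟶ ℓ) (g : ℓ ⟶ X),
      (h ≫ g).hom.hom = (LinearMap.toSpanSingleton k X (f (b i))).comp (b.coord i) ∧
      g ≫ h = (b.coord i (f (b i))) • 𝟙 ℓ := by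
    intro i
    refine ⟨(ConcreteCategory.ofHom (ULift.moduleEquiv.symm.toLinearMap ∘ₗ b.coord i) : X ⟶ ℓ),
      (ConcreteCategory.ofHom (LinearMap.toSpanSingleton k X (f (b i)) ∘ₗ
        ULift.moduleEquiv.toLinearMap) : ℓ ⟶ X), rfl, ?_⟩
    apply FGModuleCat.hom_ext
    apply LinearMap.ext
    intro x
    apply ULift.ext
    show b.coord i (x.down • f (b i)) = (b.coord i (f (b i))) • x.down
    rw [map_smul, smul_eq_mul, smul_eq_mul, mul_comm]
  choose h g hfg hgf using hh
  have hsum : (∑ i, h i ≫ g i) = f := by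
    apply FGModuleCat.hom_ext
    show auxHom k X (∑ i, h i ≫ g i) = f.hom.hom
    rw [map_sum]
    show (∑ i, (h i ≫ g i).hom.hom) = f.hom.hom
    apply LinearMap.ext
    intro x
    simp only [hfg]
    rw [LinearMap.coe_sum, Finset.sum_apply]
    simp only [LinearMap.comp_apply, LinearMap.toSpanSingleton_apply]
    calc ∑ i, b.coord i x • f (b i) = ∑ i, f (b.coord i x • b i) := by simp [map_smul]
    _ = f (∑ i, b.coord i x • b i) := by rw [map_sum]
    _ = f x := by rw [show (∑ i, b.coord i x • b i) = x by simp only [Module.Basis.coord_apply]; exact b.sum_repr x]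
  have htr : LinearMap.trace k X f.hom.hom = ∑ i, b.coord i (f (b i)) := by
    rw [LinearMap.trace_eq_matrix_trace k b f.hom.hom, Matrix.trace]
    congr 1
    ext i
    rw [Matrix.diag_apply, LinearMap.toMatrix_apply]
    rfl
  have : DirectSum.of (fun Z : FGModuleCat k => Z ⟶ Z) X f -
      LinearMap.trace k X f.hom.hom • DirectSum.of (fun Z : FGModuleCat k => Z ⟶ Z) ℓ (𝟙 ℓ)
      = ∑ i, (DirectSum.of (fun Z : FGModuleCat k => Z ⟶ Z) X (h i ≫ g i) -
          DirectSum.of (fun Z : FGModuleCat k => Z ⟶ Z) ℓ (g i ≫ h i)) := by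
    rw [Finset.sum_sub_distrib]
    simp only [← DirectSum.lof_eq_of k]
    rw [← map_sum, ← map_sum, hsum]
    congr 1
    rw [← LinearMap.map_smul]
    congr 1
    rw [htr]
    simp only [hgf]
    rw [Finset.sum_smul]
  rw [this]
  refine Submodule.sum_mem _ fun i _ => ?_
  rw [traceRelations]
  exact Submodule.subset_span ⟨X, ℓ, h i, g i, rfl⟩

end Aux

/-- Let `k` be a field and `Vect_k` the category of finite-dimensional `k`-vector
spaces.  The assignment `[f] ↦ tr(f)` (the usual trace of a linear endomorphism)
induces a well-defined isomorphism of `k`-modules `Tr(Vect_k) ≃ k`. -/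
theorem catTrace_FGModuleCat_iso (k : Type) [Field k] :
    ∃ φ : CatTrace k (FGModuleCat k) ≃ₗ[k] k,
      ∀ (V : FGModuleCat k) (f : V ⟶ V),
        φ (traceClass k (FGModuleCat k) f) = LinearMap.trace k V f.hom.hom := by
  letI : DecidableEq (FGModuleCat k) := Classical.decEq _
  set ℓ : FGModuleCat k := FGModuleCat.of k (ULift k)
  let T : CatTrace k (FGModuleCat k) →ₗ[k] k :=
    Submodule.liftQ _ (auxT k) (auxT_vanish k)
  have hT : ∀ (V : FGModuleCat k) (f : V ⟶ V),
      T (traceClass k (FGModuleCat k) f) = LinearMap.trace k V f.hom.hom := by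
    intro V f
    rw [traceClass]
    erw [Submodule.liftQ_apply]
    exact auxT_of k V f
  let S : k →ₗ[k] CatTrace k (FGModuleCat k) :=
    LinearMap.toSpanSingleton k _ (traceClass k (FGModuleCat k) (𝟙 ℓ))
  have hTS : T.comp S = LinearMap.id := by
    ext
    simp only [LinearMap.comp_apply, LinearMap.id_apply, S,
      LinearMap.toSpanSingleton_apply, map_smul]
    rw [hT]
    have : LinearMap.trace k ℓ (𝟙 ℓ : ℓ ⟶ ℓ).hom.hom = 1 := by
      show LinearMap.trace k (ULift k) LinearMap.id = 1
      rw [LinearMap.trace_id, finrank_ulift, Module.finrank_self, Nat.cast_one]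
    rw [this, smul_eq_mul, mul_one]
  have hST : S.comp T = LinearMap.id := by
    apply LinearMap.ext
    intro x
    obtain ⟨y, rfl⟩ := Submodule.Quotient.mk_surjective _ x
    induction y using DirectSum.induction_on with
    | zero => simp only [Submodule.Quotient.mk_zero, map_zero]
    | of X f =>
      show S (T (traceClass k (FGModuleCat k) f)) = traceClass k (FGModuleCat k) f
      rw [hT, auxKey]
      simp [S]
      rfl
    | add a b ha hb =>
      rw [Submodule.Quotient.mk_add]
      simp only [map_add, ha, hb, LinearMap.id_apply]
  exact ⟨LinearEquiv.ofLinear T S hTS hST, hT⟩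
end
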